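/- arXiv:2602.08691 — 3 statements merged into one kernel-verified Lean document; each statement's English description precedes it below -/
import Mathlib

section
/- Fix real numbers a > 0 and b, c < 1. For every κ > 1, the integral I_κ = ∫₀¹ (log((κ − s)/(1 − s)))^a · (1 − s)^{−b} · s^{−c} ds is finite. Moreover, I_κ → 0 as κ → 1⁺. -/
open MeasureTheory Filter Set

lemma beta_aux (p q : ℝ) (hp : p < 1) (hq : q < 1) :
    IntegrableOn (fun s : ℝ => (1 - s) ^ (-p) * s ^ (-q)) (Ioo 0 1) := by
  have hmeas : AEStronglyMeasurable (fun s : ℝ => (1 - s) ^ (-p) * s ^ (-q))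
      (volume.restrict (Ioo (0:ℝ) 1)) := by
    apply Measurable.aestronglyMeasurable
    fun_prop
  have hsplit : Ioo (0:ℝ) 1 = Ioc 0 (1/2) ∪ Ioo (1/2) 1 :=
    (Ioc_union_Ioo_eq_Ioo (by norm_num) (by norm_num)).symm
  rw [hsplit]
  apply IntegrableOn.union
  · -- on Ioc 0 (1/2): bound (1-s)^{-p} by max (2^p) 1
    have h1 : IntegrableOn (fun s : ℝ => s ^ (-q)) (Ioc 0 (1/2)) := by
      rw [← intervalIntegrable_iff_integrableOn_Ioc_of_le (by norm_num : (0:ℝ) ≤ 1/2)]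
      exact intervalIntegral.intervalIntegrable_rpow' (by linarith)
    apply Integrable.mono' (h1.const_mul (max (2 ^ p) 1)) (hmeas.mono_set (by rw [hsplit]; exact subset_union_left))
    filter_upwards [ae_restrict_mem measurableSet_Ioc] with s hs
    have hs0 : 0 < s := hs.1
    have hs1 : (1:ℝ)/2 ≤ 1 - s := by linarith [hs.2]
    have h1s : 1 - s ≤ 1 := by linarith
    have hb : (1 - s) ^ (-p) ≤ max (2 ^ p) 1 := by
      rcases le_or_gt 0 p with h|h
      · refine le_trans ?_ (le_max_left _ _)
        rw [Real.rpow_neg (by linarith)]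
        calc ((1-s) ^ p)⁻¹ ≤ ((1/2:ℝ) ^ p)⁻¹ := by
              apply inv_anti₀ (Real.rpow_pos_of_pos (by norm_num) p)
              exact Real.rpow_le_rpow (by norm_num) hs1 h
          _ = 2 ^ p := by
              rw [show (1/2:ℝ) = 2⁻¹ by norm_num, Real.inv_rpow (by norm_num), inv_inv]
      · refine le_trans ?_ (le_max_right _ _)
        calc (1-s) ^ (-p) ≤ 1 ^ (-p) := Real.rpow_le_rpow (by linarith) h1s (by linarith)
          _ = 1 := Real.one_rpow _
    have hq0 : 0 ≤ s ^ (-q) := Real.rpow_nonneg hs0.le _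
    rw [Real.norm_eq_abs, abs_of_nonneg (mul_nonneg (Real.rpow_nonneg (by linarith) _) hq0)]
    exact mul_le_mul_of_nonneg_right hb hq0
  · -- on Ioo (1/2) 1
    have h1 : IntegrableOn (fun s : ℝ => (1 - s) ^ (-p)) (Ioo (1/2) 1) := by
      have : IntervalIntegrable (fun x : ℝ => x ^ (-p)) volume 0 (1/2) :=
        intervalIntegral.intervalIntegrable_rpow' (by linarith)
      have := (this.comp_sub_left 1)
      simp only [sub_zero] at this
      have h2 := this.symm
      norm_num at h2
      rw [intervalIntegrable_iff_integrableOn_Ioc_of_le (by norm_num : (1:ℝ)/2 ≤ 1)] at h2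
      exact h2.mono_set Ioo_subset_Ioc_self
    apply Integrable.mono' (h1.const_mul (max (2 ^ q) 1)) (hmeas.mono_set (by rw [hsplit]; exact subset_union_right))
    filter_upwards [ae_restrict_mem measurableSet_Ioo] with s hs
    have hs1 : 0 < 1 - s := by linarith [hs.2]
    have hb : s ^ (-q) ≤ max (2 ^ q) 1 := by
      rcases le_or_gt 0 q with h|h
      · refine le_trans ?_ (le_max_left _ _)
        rw [Real.rpow_neg (by linarith [hs.1])]
        calc (s ^ q)⁻¹ ≤ ((1/2:ℝ) ^ q)⁻¹ := by
              apply inv_anti₀ (Real.rpow_pos_of_pos (by norm_num) q)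
              exact Real.rpow_le_rpow (by norm_num) hs.1.le h
          _ = 2 ^ q := by
              rw [show (1/2:ℝ) = 2⁻¹ by norm_num, Real.inv_rpow (by norm_num), inv_inv]
      · refine le_trans ?_ (le_max_right _ _)
        calc s ^ (-q) ≤ 1 ^ (-q) := Real.rpow_le_rpow (by linarith [hs.1]) (by linarith [hs.2]) (by linarith)
          _ = 1 := Real.one_rpow _
    have hp0 : 0 ≤ (1 - s) ^ (-p) := Real.rpow_nonneg hs1.le _
    rw [Real.norm_eq_abs, abs_of_nonneg (mul_nonneg hp0 (Real.rpow_nonneg (by linarith [hs.1]) _)),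
      mul_comm (max (2^q) 1)]
    exact mul_le_mul_of_nonneg_left hb hp0

lemma log_nonneg_ratio {κ s : ℝ} (hκ : 1 < κ) (hs : s ∈ Set.Ioo (0:ℝ) 1) :
    0 ≤ Real.log ((κ - s) / (1 - s)) := by
  have hs1 : 0 < 1 - s := by linarith [hs.2]
  apply Real.log_nonneg
  rw [le_div_iff₀ hs1]
  linarith

lemma log_bound {κ δ s : ℝ} (hκ : 1 < κ) (hδ : 0 < δ) (hs : s ∈ Set.Ioo (0:ℝ) 1) :
    Real.log ((κ - s) / (1 - s)) ≤ (κ ^ δ / δ) * (1 - s) ^ (-δ) := by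
  have hs1 : 0 < 1 - s := by linarith [hs.2]
  have hκ0 : (0:ℝ) < κ := by linarith
  calc Real.log ((κ - s) / (1 - s)) ≤ Real.log (κ / (1 - s)) := by
        apply Real.log_le_log (div_pos (by linarith [hs.2]) hs1)
        gcongr
        linarith [hs.1]
    _ ≤ (κ / (1 - s)) ^ δ / δ :=
        Real.log_le_rpow_div (div_nonneg hκ0.le hs1.le) hδ
    _ = (κ ^ δ / δ) * (1 - s) ^ (-δ) := by
        rw [Real.div_rpow hκ0.le hs1.le, Real.rpow_neg hs1.le]
        ring

/-- Pointwise bound on the full integrand. -/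
lemma integrand_bound (a b c : ℝ) (ha : 0 < a) (hb : b < 1) {κ s : ℝ} (hκ : 1 < κ)
    (hs : s ∈ Set.Ioo (0:ℝ) 1) :
    Real.log ((κ - s) / (1 - s)) ^ a * (1 - s) ^ (-b) * s ^ (-c) ≤
      ((κ ^ ((1 - b) / (2 * a)) / ((1 - b) / (2 * a))) ^ a) *
        ((1 - s) ^ (-((1 + b) / 2)) * s ^ (-c)) := by
  have hs0 := hs.1
  have hs1 : 0 < 1 - s := by linarith [hs.2]
  set δ := (1 - b) / (2 * a) with hδdef
  have hδ : 0 < δ := div_pos (by linarith) (by linarith)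
  have h0 := log_nonneg_ratio hκ hs
  have hκ0 : (0:ℝ) < κ := by linarith
  have h1 : Real.log ((κ - s) / (1 - s)) ^ a ≤ (κ ^ δ / δ) ^ a * (1 - s) ^ (-(δ * a)) := by
    calc Real.log ((κ - s) / (1 - s)) ^ a
        ≤ ((κ ^ δ / δ) * (1 - s) ^ (-δ)) ^ a :=
          Real.rpow_le_rpow h0 (log_bound hκ hδ hs) ha.le
      _ = (κ ^ δ / δ) ^ a * ((1 - s) ^ (-δ)) ^ a :=
          Real.mul_rpow (by positivity) (Real.rpow_nonneg hs1.le _)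
      _ = (κ ^ δ / δ) ^ a * (1 - s) ^ (-(δ * a)) := by
          rw [← Real.rpow_mul hs1.le, neg_mul]
  have key : (1 - s) ^ (-(δ * a)) * (1 - s) ^ (-b) = (1 - s) ^ (-((1 + b) / 2)) := by
    rw [← Real.rpow_add hs1]
    congr 1
    have ha' : a ≠ 0 := ha.ne'
    field_simp [hδdef]
    have hδa : δ * a = (1 - b) / 2 := by
      rw [hδdef, div_mul_eq_mul_div, mul_div_mul_right _ _ ha']
    linarith
  calc Real.log ((κ - s) / (1 - s)) ^ a * (1 - s) ^ (-b) * s ^ (-c)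
      ≤ ((κ ^ δ / δ) ^ a * (1 - s) ^ (-(δ * a))) * (1 - s) ^ (-b) * s ^ (-c) :=
        mul_le_mul_of_nonneg_right
          (mul_le_mul_of_nonneg_right h1 (Real.rpow_nonneg hs1.le _))
          (Real.rpow_nonneg hs0.le _)
    _ = (κ ^ δ / δ) ^ a * (((1 - s) ^ (-(δ * a)) * (1 - s) ^ (-b)) * s ^ (-c)) := by ring
    _ = (κ ^ δ / δ) ^ a * ((1 - s) ^ (-((1 + b) / 2)) * s ^ (-c)) := by rw [key]

/-- For fixed `a > 0` and `b, c < 1`, the integral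
`I_κ = ∫₀¹ (log((κ−s)/(1−s)))^a (1−s)^(−b) s^(−c) ds` converges for every `κ > 1`,
and `I_κ → 0` as `κ → 1⁺`. -/
theorem stmt_4 (a b c : ℝ) (ha : 0 < a) (hb : b < 1) (hc : c < 1) :
    (∀ κ : ℝ, 1 < κ →
      IntegrableOn
        (fun s : ℝ => (Real.log ((κ - s) / (1 - s))) ^ a * (1 - s) ^ (-b) * s ^ (-c))
        (Ioo 0 1)) ∧
    Tendsto
      (fun κ : ℝ => ∫ s in Ioo (0:ℝ) 1,
        (Real.log ((κ - s) / (1 - s))) ^ a * (1 - s) ^ (-b) * s ^ (-c))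
      (nhdsWithin 1 (Ioi 1)) (nhds 0) := by
  have hnn : ∀ {κ s : ℝ}, 1 < κ → s ∈ Set.Ioo (0:ℝ) 1 →
      0 ≤ Real.log ((κ - s) / (1 - s)) ^ a * (1 - s) ^ (-b) * s ^ (-c) := by
    intro κ s hκ hs
    have hs1 : (0:ℝ) < 1 - s := by linarith [hs.2]
    exact mul_nonneg (mul_nonneg (Real.rpow_nonneg (log_nonneg_ratio hκ hs) a)
      (Real.rpow_nonneg hs1.le _)) (Real.rpow_nonneg hs.1.le _)
  have hint : ∀ κ : ℝ, 1 < κ →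
      IntegrableOn
        (fun s : ℝ => (Real.log ((κ - s) / (1 - s))) ^ a * (1 - s) ^ (-b) * s ^ (-c))
        (Ioo 0 1) := by
    intro κ hκ
    have hb' : (1 + b) / 2 < 1 := by linarith
    have hbeta := (beta_aux ((1 + b) / 2) c hb' hc).const_mul
      ((κ ^ ((1 - b) / (2 * a)) / ((1 - b) / (2 * a))) ^ a)
    apply Integrable.mono' hbeta
    · refine Measurable.aestronglyMeasurable ?_
      have h : Measurable (fun s : ℝ => Real.log ((κ - s) / (1 - s))) :=
        Real.measurable_log.comp (by fun_prop)
      fun_prop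
    · filter_upwards [ae_restrict_mem measurableSet_Ioo] with s hs
      rw [Real.norm_eq_abs, abs_of_nonneg (hnn hκ hs)]
      exact integrand_bound a b c ha hb hκ hs
  refine ⟨hint, ?_⟩
  have key := MeasureTheory.tendsto_integral_filter_of_dominated_convergence
    (μ := volume.restrict (Ioo (0:ℝ) 1)) (l := nhdsWithin (1:ℝ) (Ioi 1))
    (F := fun κ s => (Real.log ((κ - s) / (1 - s))) ^ a * (1 - s) ^ (-b) * s ^ (-c))
    (f := fun _ => (0:ℝ))
    (bound := fun s => (Real.log ((2 - s) / (1 - s))) ^ a * (1 - s) ^ (-b) * s ^ (-c))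
    (Eventually.of_forall fun κ => Measurable.aestronglyMeasurable (by
      have h : Measurable (fun s : ℝ => Real.log ((κ - s) / (1 - s))) :=
        Real.measurable_log.comp (by fun_prop)
      fun_prop))
    ?_ (hint 2 one_lt_two) ?_
  · simpa using key
  · -- eventual bound
    filter_upwards [Ioc_mem_nhdsGT_of_mem (⟨le_refl 1, one_lt_two⟩ : (1:ℝ) ∈ Ico 1 2)]
      with κ hκ
    filter_upwards [ae_restrict_mem measurableSet_Ioo] with s hs
    rw [Real.norm_eq_abs, abs_of_nonneg (hnn hκ.1 hs)]
    have hs1 : (0:ℝ) < 1 - s := by linarith [hs.2]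
    have hlog : Real.log ((κ - s) / (1 - s)) ≤ Real.log ((2 - s) / (1 - s)) := by
      apply Real.log_le_log (div_pos (by linarith [hs.2, hκ.1]) hs1)
      gcongr <;> linarith [hs.2, hκ.2]
    exact mul_le_mul_of_nonneg_right
      (mul_le_mul_of_nonneg_right
        (Real.rpow_le_rpow (log_nonneg_ratio hκ.1 hs) hlog ha.le)
        (Real.rpow_nonneg hs1.le _))
      (Real.rpow_nonneg hs.1.le _)
  · -- pointwise limit
    filter_upwards [ae_restrict_mem measurableSet_Ioo] with s hs
    have hs1 : (0:ℝ) < 1 - s := by linarith [hs.2]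
    have T1 : Tendsto (fun κ : ℝ => (κ - s) / (1 - s)) (nhdsWithin 1 (Ioi 1)) (nhds 1) := by
      have h : Tendsto (fun κ : ℝ => (κ - s) / (1 - s)) (nhds 1) (nhds ((1 - s) / (1 - s))) :=
        Continuous.tendsto (by continuity) 1
      rw [div_self hs1.ne'] at h
      exact h.mono_left nhdsWithin_le_nhds
    have T2 : Tendsto Real.log (nhds 1) (nhds 0) := by
      simpa using (Real.continuousAt_log one_ne_zero).tendsto
    have T3 : Tendsto (fun x : ℝ => x ^ a) (nhds 0) (nhds 0) := by
      have h := (Real.continuousAt_rpow_const 0 a (Or.inr ha.le)).tendsto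
      simpa [Real.zero_rpow ha.ne'] using h
    have T := ((T3.comp (T2.comp T1)).mul_const ((1 - s) ^ (-b))).mul_const (s ^ (-c))
    simpa [Function.comp] using T
end

section
/- Let g(t) = Σ_{i=1}^n k_i·t^{α_i−1}·e^{c_i t} with k_i > 0, α_i > 0, c_i ∈ ℝ, and let ζ = 1 + min_i α_i. Then |ĝ(λ)|·|λ|^{ζ−1} → Σ_{s} k_{i_s}·Γ(α_{i_s}) > 0 as |λ| → ∞ within the sector {λ : Re(λ) > ω, |arg(λ − ω)| < η + π/2}, where the sum runs over all indices attaining min_i α_i, ω > max{0, c_1,...,c_n}, and η ∈ (0, π/2). In particular, limsup_{|λ|→∞} 1/(|ĝ(λ)|·|λ|^{ζ−1}) < ∞. -/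
open Filter Set

lemma aux_arg_lt {η : ℝ} (hη1 : 0 < η) (hη2 : η < Real.pi / 2) {z : ℂ} (hz : z ≠ 0)
    (hre : -Real.sin η * ‖z‖ < z.re) : |Complex.arg z| < η + Real.pi / 2 := by
  have hπ := Real.pi_pos
  have habs : 0 < ‖z‖ := norm_pos_iff.mpr hz
  have hcos : Real.cos (η + Real.pi / 2) < Real.cos |Complex.arg z| := by
    rw [Real.cos_add_pi_div_two, Real.cos_abs, Complex.cos_arg hz]
    rw [lt_div_iff₀ habs]
    nlinarith [hre]
  have h1 : η + Real.pi / 2 ∈ Icc 0 Real.pi := ⟨by linarith, by linarith⟩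
  have h2 : |Complex.arg z| ∈ Icc 0 Real.pi := ⟨abs_nonneg _, Complex.abs_arg_le_pi z⟩
  exact (Real.strictAntiOn_cos.lt_iff_gt h1 h2).mp hcos

lemma aux_arg_gt {η : ℝ} (hη1 : 0 < η) (hη2 : η < Real.pi / 2) {z : ℂ} (hz : z ≠ 0)
    (harg : |Complex.arg z| < η + Real.pi / 2) : -Real.sin η * ‖z‖ < z.re := by
  have hπ := Real.pi_pos
  have habs : 0 < ‖z‖ := norm_pos_iff.mpr hz
  have h1 : η + Real.pi / 2 ∈ Icc 0 Real.pi := ⟨by linarith, by linarith⟩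
  have h2 : |Complex.arg z| ∈ Icc 0 Real.pi := ⟨abs_nonneg _, Complex.abs_arg_le_pi z⟩
  have hcos : Real.cos (η + Real.pi / 2) < Real.cos |Complex.arg z| :=
    Real.strictAntiOn_cos.lt_iff_gt h1 h2 |>.mpr harg
  rw [Real.cos_add_pi_div_two, Real.cos_abs, Complex.cos_arg hz] at hcos
  rw [lt_div_iff₀ habs] at hcos
  nlinarith

lemma aux_abs_sub {L : Filter ℂ} (hL : Tendsto (fun z : ℂ => ‖z‖) L atTop) (d : ℝ) :
    Tendsto (fun lam => ‖lam - (d : ℂ)‖) L atTop := by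
  have h1 : ∀ lam : ℂ, ‖lam‖ - |d| ≤ ‖lam - (d : ℂ)‖ := by
    intro lam
    simpa using norm_sub_norm_le lam (d : ℂ)
  exact tendsto_atTop_mono h1 (tendsto_atTop_add_const_right _ _ hL)

lemma aux_ne {L : Filter ℂ} (hL : Tendsto (fun z : ℂ => ‖z‖) L atTop) (d : ℝ) :
    ∀ᶠ lam in L, lam - (d : ℂ) ≠ 0 := by
  filter_upwards [(aux_abs_sub hL d).eventually_gt_atTop 0] with lam h
  exact norm_ne_zero_iff.mp h.ne'

lemma aux_div_one {L : Filter ℂ} (hL : Tendsto (fun z : ℂ => ‖z‖) L atTop) (d : ℝ) :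
    Tendsto (fun lam => lam / (lam - (d : ℂ))) L (nhds 1) := by
  have h0 : Tendsto (fun lam => (d : ℂ) / (lam - (d : ℂ))) L (nhds 0) := by
    rw [tendsto_zero_iff_norm_tendsto_zero]
    have : (fun lam : ℂ => ‖(d : ℂ) / (lam - (d : ℂ))‖)
        = fun lam => |d| / ‖lam - (d : ℂ)‖ := by
      funext lam; simp [norm_div]
    rw [this]
    exact tendsto_const_nhds.div_atTop (aux_abs_sub hL d)
  have h1 : Tendsto (fun lam : ℂ => 1 + (d : ℂ) / (lam - (d : ℂ))) L (nhds 1) := by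
    simpa using tendsto_const_nhds.add h0
  refine h1.congr' ?_
  filter_upwards [aux_ne hL d] with lam h
  field_simp
  ring

lemma aux_term {L : Filter ℂ} {ω η c m αi : ℝ} (hω : 0 < ω) (hc : c < ω)
    (hη1 : 0 < η) (hη2 : η < Real.pi / 2) (hm : m ≤ αi)
    (hL : Tendsto (fun z : ℂ => ‖z‖) L atTop)
    (hsec : ∀ᶠ lam in L, lam ≠ (ω : ℂ) ∧ |Complex.arg (lam - (ω : ℂ))| < η + Real.pi / 2) :
    Tendsto (fun lam : ℂ => lam ^ (m : ℂ) / (lam - (c : ℂ)) ^ (αi : ℂ)) L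
      (nhds (if αi = m then 1 else 0)) := by
  have hπ := Real.pi_pos
  have hsin0 : 0 < Real.sin η := Real.sin_pos_of_pos_of_lt_pi hη1 (by linarith)
  have hsin1 : Real.sin η < 1 := by
    have := Real.strictMonoOn_sin (by constructor <;> linarith : η ∈ Icc (-(Real.pi/2)) (Real.pi/2))
      (by constructor <;> linarith : Real.pi/2 ∈ Icc (-(Real.pi/2)) (Real.pi/2)) hη2
    rwa [Real.sin_pi_div_two] at this
  -- arg bound for lam - c
  have hargx : ∀ᶠ lam in L, |Complex.arg (lam - (c : ℂ))| < η + Real.pi / 2 := by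
    filter_upwards [hsec, aux_ne hL c] with lam hs hcne
    obtain ⟨hωne, hargω⟩ := hs
    have hωne' : lam - (ω : ℂ) ≠ 0 := sub_ne_zero.mpr hωne
    have h1 : -Real.sin η * ‖lam - (ω : ℂ)‖ < (lam - (ω : ℂ)).re :=
      aux_arg_gt hη1 hη2 hωne' hargω
    have habsle : ‖lam - (ω : ℂ)‖ ≤ ‖lam - (c : ℂ)‖ + (ω - c) := by
      have h2 : ‖(c : ℂ) - (ω : ℂ)‖ = ω - c := by
        rw [← Complex.ofReal_sub, Complex.norm_real, Real.norm_eq_abs, abs_of_neg (by linarith)]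
        ring
      have := norm_sub_le_norm_sub_add_norm_sub lam (c : ℂ) (ω : ℂ)
      rw [h2] at this
      exact this
    have hre : (lam - (c : ℂ)).re = (lam - (ω : ℂ)).re + (ω - c) := by
      simp [Complex.sub_re, Complex.ofReal_re]
      try ring
    refine aux_arg_lt hη1 hη2 hcne ?_
    rw [hre]
    nlinarith [norm_nonneg (lam - (ω : ℂ))]
  -- arg of lam/(lam-c) tends to 0
  have hq1 := aux_div_one hL c
  have hargq : Tendsto (fun lam : ℂ => Complex.arg (lam / (lam - (c : ℂ)))) L (nhds 0) := by
    have hcont : ContinuousAt Complex.arg 1 := Complex.continuousAt_arg Complex.one_mem_slitPlane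
    simpa [Complex.arg_one, Function.comp_def] using hcont.tendsto.comp hq1
  have hargq' : ∀ᶠ lam in L, |Complex.arg (lam / (lam - (c : ℂ)))| < Real.pi / 2 - η := by
    have hb : ∀ᶠ x : ℝ in nhds 0, |x| < Real.pi / 2 - η := by
      have hc0 : Tendsto (fun x : ℝ => |x|) (nhds (0:ℝ)) (nhds |0|) :=
        (continuous_abs.tendsto (0:ℝ))
      simp only [abs_zero] at hc0
      exact hc0.eventually (eventually_lt_nhds (by linarith))
    exact hargq.eventually hb
  -- the cpow split of lam^m/(lam-c)^m
  have hcombine : ∀ᶠ lam in L,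
      lam ^ (m : ℂ) / (lam - (c : ℂ)) ^ (m : ℂ) = (lam / (lam - (c : ℂ))) ^ (m : ℂ) := by
    filter_upwards [aux_ne hL 0, aux_ne hL c, hargx, hargq'] with lam h0 hcne hax hay
    have h0' : lam ≠ 0 := by simpa using h0
    set y := lam / (lam - (c : ℂ)) with hy
    have hy0 : y ≠ 0 := div_ne_zero h0' hcne
    have hxy : (lam - (c : ℂ)) * y = lam := by
      rw [hy]; field_simp
    have hsum : Complex.arg (lam - (c : ℂ)) + Complex.arg y ∈ Ioc (-Real.pi) Real.pi := by
      rcases abs_lt.mp hax with ⟨ha1, ha2⟩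
      rcases abs_lt.mp hay with ⟨hb1, hb2⟩
      constructor <;> [skip; skip] <;> linarith
    have hlog : Complex.log lam = Complex.log (lam - (c : ℂ)) + Complex.log y := by
      have := Complex.log_mul hcne hy0 hsum
      rwa [hxy] at this
    have hxm : (lam - (c : ℂ)) ^ (m : ℂ) ≠ 0 := by
      simp [Complex.cpow_eq_zero_iff, hcne]
    rw [div_eq_iff hxm, Complex.cpow_def_of_ne_zero h0', Complex.cpow_def_of_ne_zero hy0,
      Complex.cpow_def_of_ne_zero hcne, hlog, add_mul, Complex.exp_add]
    ring
  -- factor 1 tends to 1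
  have hF1 : Tendsto (fun lam : ℂ => lam ^ (m : ℂ) / (lam - (c : ℂ)) ^ (m : ℂ)) L (nhds 1) := by
    have hcont : ContinuousAt (fun z : ℂ => z ^ (m : ℂ)) 1 :=
      continuousAt_cpow_const Complex.one_mem_slitPlane
    have := hcont.tendsto.comp hq1
    rw [Complex.one_cpow] at this
    exact this.congr' (hcombine.mono fun lam h => h.symm)
  -- factor 2
  have hF2 : Tendsto (fun lam : ℂ => (lam - (c : ℂ)) ^ ((m - αi : ℝ) : ℂ)) L
      (nhds (if αi = m then 1 else 0)) := by
    by_cases he : αi = m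
    · subst he
      simp only [sub_self, if_true]
      have : ∀ lam : ℂ, (lam - (c : ℂ)) ^ ((αi - αi : ℝ) : ℂ) = 1 := by
        intro lam; norm_num
      simpa [this] using tendsto_const_nhds (α := ℂ) (f := L)
    · simp only [he, if_false]
      rw [tendsto_zero_iff_norm_tendsto_zero]
      have heq : (fun lam : ℂ => ‖(lam - (c : ℂ)) ^ ((m - αi : ℝ) : ℂ)‖)
          = fun lam => ‖lam - (c : ℂ)‖ ^ (m - αi) := by
        funext lam
        rw [Complex.norm_cpow_real]
      rw [heq]
      have hneg : m - αi < 0 := sub_neg.mpr (lt_of_le_of_ne hm (fun h => he h.symm))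
      have := (tendsto_rpow_neg_atTop (by linarith : 0 < αi - m)).comp (aux_abs_sub hL c)
      simpa [Function.comp_def, neg_sub] using this
  -- combine
  have hmul := hF1.mul hF2
  rw [one_mul] at hmul
  refine hmul.congr' ?_
  filter_upwards [aux_ne hL c] with lam hcne
  have hxm : (lam - (c : ℂ)) ^ (m : ℂ) ≠ 0 := by
    simp [Complex.cpow_eq_zero_iff, hcne]
  have hsub : (lam - (c : ℂ)) ^ ((m - αi : ℝ) : ℂ)
      = (lam - (c : ℂ)) ^ (m : ℂ) / (lam - (c : ℂ)) ^ (αi : ℂ) := by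
    rw [← Complex.cpow_sub _ _ hcne]
    norm_num
  rw [hsub]
  field_simp

/-- With `ĝ(λ) = Σᵢ kᵢ Γ(αᵢ)/(λ−cᵢ)^{αᵢ}` and `ζ = 1 + minᵢ αᵢ`,
`|ĝ(λ)|·|λ|^{ζ−1}` tends to `Σ_{αᵢ = min} kᵢ Γ(αᵢ) > 0` as `|λ| → ∞` within the
sector `{λ : λ ≠ ω, |arg(λ−ω)| < η + π/2}`, `ω > max{0,c₁,…,cₙ}`, `η ∈ (0,π/2)`.
In particular `1/(|ĝ(λ)|·|λ|^{ζ−1})` is eventually bounded. -/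
theorem stmt_9 (n : ℕ) (k α c : Fin n → ℝ)
    (hk : ∀ i, 0 < k i) (hα : ∀ i, 0 < α i)
    (m : ℝ) (hm : ∀ i, m ≤ α i) (hmem : ∃ i, α i = m)
    (ω η : ℝ) (hω0 : 0 < ω) (hωc : ∀ i, c i < ω) (hη : η ∈ Ioo 0 (Real.pi / 2)) :
    Tendsto
      (fun lam : ℂ =>
        ‖∑ i, ((k i * Real.Gamma (α i) : ℝ) : ℂ) / (lam - (c i : ℂ)) ^ (α i : ℂ)‖ *
          ‖lam‖ ^ ((1 + m) - 1))
      ((Filter.comap (fun z : ℂ => ‖z‖) Filter.atTop) ⊓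
        Filter.principal {lam : ℂ | lam ≠ (ω : ℂ) ∧
          |Complex.arg (lam - (ω : ℂ))| < η + Real.pi / 2})
      (nhds (∑ i ∈ Finset.univ.filter (fun i => α i = m), k i * Real.Gamma (α i))) ∧
    (0 < ∑ i ∈ Finset.univ.filter (fun i => α i = m), k i * Real.Gamma (α i)) ∧
    (∃ C : ℝ, ∀ᶠ lam : ℂ in
      (Filter.comap (fun z : ℂ => ‖z‖) Filter.atTop) ⊓
        Filter.principal {lam : ℂ | lam ≠ (ω : ℂ) ∧
          |Complex.arg (lam - (ω : ℂ))| < η + Real.pi / 2},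
      1 / (‖∑ i, ((k i * Real.Gamma (α i) : ℝ) : ℂ) /
            (lam - (c i : ℂ)) ^ (α i : ℂ)‖ * ‖lam‖ ^ ((1 + m) - 1)) ≤ C) := by
  obtain ⟨hη1, hη2⟩ := hη
  set L : Filter ℂ := (Filter.comap (fun z : ℂ => ‖z‖) Filter.atTop) ⊓
      Filter.principal {lam : ℂ | lam ≠ (ω : ℂ) ∧
        |Complex.arg (lam - (ω : ℂ))| < η + Real.pi / 2} with hLdef
  have hL : Tendsto (fun z : ℂ => ‖z‖) L atTop := tendsto_comap.mono_left inf_le_left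
  have hsec : ∀ᶠ lam in L, lam ≠ (ω : ℂ) ∧ |Complex.arg (lam - (ω : ℂ))| < η + Real.pi / 2 := by
    rw [hLdef]
    exact (eventually_inf_principal).mpr (Eventually.of_forall fun x hx => hx)
  set T : ℝ := ∑ i ∈ Finset.univ.filter (fun i => α i = m), k i * Real.Gamma (α i) with hTdef
  have hTpos : 0 < T := by
    obtain ⟨i0, hi0⟩ := hmem
    refine Finset.sum_pos (fun i _ => mul_pos (hk i) (Real.Gamma_pos_of_pos (hα i))) ?_
    exact ⟨i0, Finset.mem_filter.mpr ⟨Finset.mem_univ _, hi0⟩⟩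
  -- complex limit of the sum times lam^m
  have hH : Tendsto
      (fun lam : ℂ => (∑ i, ((k i * Real.Gamma (α i) : ℝ) : ℂ) / (lam - (c i : ℂ)) ^ (α i : ℂ))
        * lam ^ (m : ℂ)) L (nhds (T : ℂ)) := by
    have hterm : ∀ i : Fin n, Tendsto
        (fun lam : ℂ => ((k i * Real.Gamma (α i) : ℝ) : ℂ) *
          (lam ^ (m : ℂ) / (lam - (c i : ℂ)) ^ (α i : ℂ))) L
        (nhds (((k i * Real.Gamma (α i) : ℝ) : ℂ) * (if α i = m then 1 else 0))) := fun i =>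
      tendsto_const_nhds.mul (aux_term hω0 (hωc i) hη1 hη2 (hm i) hL hsec)
    have hsum := tendsto_finset_sum Finset.univ (fun i _ => hterm i)
    have heq1 : (fun lam : ℂ =>
        (∑ i, ((k i * Real.Gamma (α i) : ℝ) : ℂ) / (lam - (c i : ℂ)) ^ (α i : ℂ)) * lam ^ (m : ℂ))
        = fun lam : ℂ => ∑ i, ((k i * Real.Gamma (α i) : ℝ) : ℂ) *
          (lam ^ (m : ℂ) / (lam - (c i : ℂ)) ^ (α i : ℂ)) := by
      funext lam
      rw [Finset.sum_mul]
      exact Finset.sum_congr rfl fun i _ => by ring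
    have heq2 : (∑ i, ((k i * Real.Gamma (α i) : ℝ) : ℂ) * (if α i = m then 1 else 0))
        = (T : ℂ) := by
      rw [hTdef]
      push_cast
      rw [Finset.sum_filter]
      exact Finset.sum_congr rfl fun i _ => by split <;> simp
    rw [heq1, ← heq2]
    exact hsum
  have hmain : Tendsto
      (fun lam : ℂ =>
        ‖∑ i, ((k i * Real.Gamma (α i) : ℝ) : ℂ) / (lam - (c i : ℂ)) ^ (α i : ℂ)‖ *
          ‖lam‖ ^ ((1 + m) - 1)) L (nhds T) := by
    have heq : (fun lam : ℂ =>
        ‖∑ i, ((k i * Real.Gamma (α i) : ℝ) : ℂ) / (lam - (c i : ℂ)) ^ (α i : ℂ)‖ *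
          ‖lam‖ ^ ((1 + m) - 1))
        = fun lam : ℂ => ‖
          (∑ i, ((k i * Real.Gamma (α i) : ℝ) : ℂ) / (lam - (c i : ℂ)) ^ (α i : ℂ))
            * lam ^ (m : ℂ)‖ := by
      funext lam
      rw [norm_mul, Complex.norm_cpow_real, add_sub_cancel_left]
    rw [heq]
    have := hH.norm
    simpa [abs_of_pos hTpos] using this
  refine ⟨hmain, hTpos, ⟨1 / (T / 2), ?_⟩⟩
  filter_upwards [hmain.eventually (eventually_gt_nhds (by linarith : T / 2 < T))] with lam hf
  exact one_div_le_one_div_of_le (by linarith) hf.le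
end

section
/- Let X, Y be Banach spaces with Y continuously and densely embedded in X, let ζ > 1, β > 0, and let {S(t)}_{t>0} be a family of bounded operators on X with ‖S(t)‖_{B(X,Y)} ≤ M·t^{−ζβ} and ‖S(t)‖_{B(Y,Y)} ≤ M for all t ∈ (0, τ]. Then for every compact set J ⊂ X, lim_{t→0⁺} t^{ζβ}·sup_{x∈J} ‖S(t)x‖_Y = 0. -/
open Set Filter

/-- Abstract smoothing on compacts: if `Y` embeds continuously and densely into `X`
via `ι`, and `S(t) : X → Y` satisfies `‖S(t)‖_{B(X,Y)} ≤ M t^(−ζβ)` and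
`‖S(t)‖_{B(Y,Y)} ≤ M` on `(0, τ]`, then for every compact `J ⊆ X`,
`t^(ζβ)·sup_{x ∈ J} ‖S(t)x‖_Y → 0` as `t → 0⁺`. -/
theorem stmt_16 {X Y : Type*} [NormedAddCommGroup X] [NormedSpace ℝ X]
    [NormedAddCommGroup Y] [NormedSpace ℝ Y] [CompleteSpace X] [CompleteSpace Y]
    (ι : Y →L[ℝ] X) (hι_inj : Function.Injective ι) (hι_dense : DenseRange ι)
    (ζ β M τ : ℝ) (hζ : 1 < ζ) (hβ : 0 < β) (hM : 0 < M) (hτ : 0 < τ)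
    (S : ℝ → X →L[ℝ] Y)
    (hS1 : ∀ t ∈ Ioc (0:ℝ) τ, ‖S t‖ ≤ M * t ^ (-(ζ * β)))
    (hS2 : ∀ t ∈ Ioc (0:ℝ) τ, ∀ y : Y, ‖S t (ι y)‖ ≤ M * ‖y‖) :
    ∀ J : Set X, IsCompact J →
      Tendsto (fun t : ℝ => t ^ (ζ * β) * ⨆ x ∈ J, ‖S t x‖)
        (nhdsWithin 0 (Ioi 0)) (nhds 0) := by
  intro J hJ
  have hζ0 : (0:ℝ) < ζ := lt_trans one_pos hζ
  have hp : 0 < ζ * β := mul_pos hζ0 hβ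
  rw [Metric.tendsto_nhds]
  intro ε hε
  have hδ : 0 < ε / (2 * M) := by positivity
  set δ := ε / (2 * M) with hδdef
  have hcover : J ⊆ ⋃ y : Y, Metric.ball (ι y) δ := by
    intro x _
    obtain ⟨y, hy⟩ := hι_dense.exists_dist_lt x hδ
    exact Set.mem_iUnion.2 ⟨y, by simpa [Metric.mem_ball, dist_comm] using hy⟩
  obtain ⟨s, hs⟩ := hJ.elim_finite_subcover _ (fun y : Y => Metric.isOpen_ball) hcover
  obtain ⟨C, hC0, hC⟩ : ∃ C : ℝ, 0 ≤ C ∧ ∀ y ∈ s, ‖y‖ ≤ C :=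
    ⟨((s.sup fun y => ‖y‖₊ : NNReal) : ℝ), (s.sup fun y => ‖y‖₊ : NNReal).coe_nonneg,
      fun y hy => by exact_mod_cast Finset.le_sup (f := fun y => ‖y‖₊) hy⟩
  have h1 : Tendsto (fun t : ℝ => t ^ (ζ * β)) (nhdsWithin 0 (Ioi 0)) (nhds 0) := by
    have := (Real.continuousAt_rpow_const 0 (ζ * β) (Or.inr hp.le)).tendsto
    rw [Real.zero_rpow hp.ne'] at this
    exact this.mono_left nhdsWithin_le_nhds
  have htend : Tendsto (fun t : ℝ => t ^ (ζ * β) * (M * C)) (nhdsWithin 0 (Ioi 0)) (nhds 0) := by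
    simpa using h1.mul_const (M * C)
  have h2 : ∀ᶠ t in nhdsWithin (0:ℝ) (Ioi 0), t ^ (ζ * β) * (M * C) < ε / 2 :=
    htend.eventually (gt_mem_nhds (half_pos hε))
  have h3 : Ioc (0:ℝ) τ ∈ nhdsWithin (0:ℝ) (Ioi 0) :=
    Ioc_mem_nhdsGT_of_mem ⟨le_refl 0, hτ⟩
  filter_upwards [h2, h3] with t ht2 ht3
  have ht0 : 0 < t := ht3.1
  have hBnn : 0 ≤ M * t ^ (-(ζ * β)) * δ + M * C := by positivity
  have hsup : (⨆ x ∈ J, ‖S t x‖) ≤ M * t ^ (-(ζ * β)) * δ + M * C := by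
    refine Real.iSup_le (fun x => Real.iSup_le (fun hx => ?_) hBnn) hBnn
    have hxmem := hs hx
    rw [Set.mem_iUnion₂] at hxmem
    obtain ⟨y, hy, hxy⟩ := hxmem
    have key : ‖S t x‖ ≤ ‖S t (x - ι y)‖ + ‖S t (ι y)‖ := by
      calc ‖S t x‖ = ‖S t (x - ι y) + S t (ι y)‖ := by
            rw [← map_add, sub_add_cancel]
        _ ≤ _ := norm_add_le _ _
    have hb1 : ‖S t (x - ι y)‖ ≤ M * t ^ (-(ζ * β)) * δ := by
      calc ‖S t (x - ι y)‖ ≤ ‖S t‖ * ‖x - ι y‖ := (S t).le_opNorm _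
        _ ≤ (M * t ^ (-(ζ * β))) * δ := by
            apply mul_le_mul (hS1 t ht3) ?_ (norm_nonneg _) (by positivity)
            rw [← dist_eq_norm]
            exact le_of_lt (Metric.mem_ball.1 hxy)
    have hb2 : ‖S t (ι y)‖ ≤ M * C :=
      (hS2 t ht3 y).trans (mul_le_mul_of_nonneg_left (hC y hy) hM.le)
    linarith
  have hfnn : 0 ≤ t ^ (ζ * β) * ⨆ x ∈ J, ‖S t x‖ := by
    apply mul_nonneg (Real.rpow_nonneg ht0.le _)
    exact Real.iSup_nonneg fun x => Real.iSup_nonneg fun _ => norm_nonneg _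
  rw [Real.dist_eq, sub_zero, abs_of_nonneg hfnn]
  have hMδ : M * δ = ε / 2 := by
    rw [hδdef]; field_simp
  calc t ^ (ζ * β) * (⨆ x ∈ J, ‖S t x‖)
      ≤ t ^ (ζ * β) * (M * t ^ (-(ζ * β)) * δ + M * C) :=
        mul_le_mul_of_nonneg_left hsup (Real.rpow_nonneg ht0.le _)
    _ = M * δ * (t ^ (ζ * β) * t ^ (-(ζ * β))) + t ^ (ζ * β) * (M * C) := by ring
    _ = M * δ + t ^ (ζ * β) * (M * C) := by
        rw [← Real.rpow_add ht0, add_neg_cancel, Real.rpow_zero, mul_one]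
    _ < ε / 2 + ε / 2 := by rw [hMδ]; linarith
    _ = ε := add_halves ε
end
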